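/- For every real number γ ≥ 0, the expected total number of friends Q(γ, n) satisfies: Q(γ, n) = Θ(n) if γ > 2; Q(γ, n) = Θ(n·log n) if γ = 2; Q(γ, n) = Θ(n^{3−γ}) if 1 < γ < 2; Q(γ, n) = Θ(n²/log n) if γ = 1; and Q(γ, n) = Θ(n²) if 0 ≤ γ < 1. -/

import Mathlib

/-- `f(n) = Θ(h(n))`: there exist constants `0 < c₁ ≤ c₂` and `N₀` such that
`c₁·h(n) ≤ f(n) ≤ c₂·h(n)` for all integers `n ≥ N₀`. -/
def IsBigTheta (f h : ℕ → ℝ) : Prop :=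
  ∃ c₁ c₂ : ℝ, 0 < c₁ ∧ c₁ ≤ c₂ ∧ ∃ N₀ : ℕ, ∀ n : ℕ, N₀ ≤ n →
    c₁ * h n ≤ f n ∧ f n ≤ c₂ * h n

/-- Zipf normalization `Z(γ, n) = Σ_{j=1}^{n−1} j^{−γ}`. -/
noncomputable def Z (γ : ℝ) (n : ℕ) : ℝ := ∑ j ∈ Finset.Icc 1 (n - 1), (j : ℝ) ^ (-γ)

/-- Expected total number of friends `Q(γ, n) = n·Z(γ, n)⁻¹·Σ_{l=1}^{n−1} l^{1−γ}`. -/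
noncomputable def Q (γ : ℝ) (n : ℕ) : ℝ :=
  n * (Z γ n)⁻¹ * ∑ l ∈ Finset.Icc 1 (n - 1), (l : ℝ) ^ (1 - γ)

/-! ### Auxiliary material -/

/-- The partial power sum `Σ_{l=1}^m l^β`. -/
noncomputable def P (β : ℝ) (m : ℕ) : ℝ := ∑ l ∈ Finset.Icc 1 m, (l : ℝ) ^ β

lemma P_nonneg (β : ℝ) (m : ℕ) : 0 ≤ P β m :=
  Finset.sum_nonneg fun l _ => Real.rpow_nonneg (Nat.cast_nonneg l) β

lemma one_le_P {β : ℝ} {m : ℕ} (hm : 1 ≤ m) : 1 ≤ P β m := by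
  have h1 : (1 : ℕ) ∈ Finset.Icc 1 m := by simp [hm]
  have := Finset.single_le_sum (f := fun l : ℕ => (l : ℝ) ^ β)
    (fun l _ => Real.rpow_nonneg (Nat.cast_nonneg l) β) h1
  simpa [P] using this

/-- For `β < -1` the power sum is bounded. -/
lemma sumA {β : ℝ} (hβ : β < -1) : ∃ C : ℝ, 1 ≤ C ∧ ∀ m : ℕ, 1 ≤ m →
    1 ≤ P β m ∧ P β m ≤ C := by
  have hsum : Summable fun l : ℕ => (l : ℝ) ^ β := Real.summable_nat_rpow.2 hβ
  refine ⟨∑' l : ℕ, (l : ℝ) ^ β, ?_, fun m hm => ⟨one_le_P hm, ?_⟩⟩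
  · exact le_trans (one_le_P (le_refl 1))
      (Summable.sum_le_tsum _ (fun l _ => Real.rpow_nonneg (Nat.cast_nonneg l) β) hsum)
  · exact Summable.sum_le_tsum _ (fun l _ => Real.rpow_nonneg (Nat.cast_nonneg l) β) hsum

lemma P_neg_one (m : ℕ) : P (-1) m = (harmonic m : ℝ) := by
  rw [harmonic_eq_sum_Icc]
  push_cast
  exact Finset.sum_congr rfl fun l _ => Real.rpow_neg_one _

lemma sumH (m : ℕ) : Real.log (m + 1) ≤ P (-1) m ∧ P (-1) m ≤ 1 + Real.log m := by
  rw [P_neg_one]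
  exact ⟨by simpa using log_add_one_le_harmonic m, harmonic_le_one_add_log m⟩

/-- Telescoping upper bound for `-1 < β ≤ 0`. -/
lemma mid_upper {β : ℝ} (hβ1 : -1 < β) (h0 : β ≤ 0) (m : ℕ) :
    P β m ≤ (1 + β)⁻¹ * (m : ℝ) ^ (1 + β) := by
  set p := 1 + β with hp
  have hp0 : 0 < p := by linarith
  have hp1 : p ≤ 1 := by linarith
  have key : ∀ l : ℕ, l ∈ Finset.Icc 1 m →
      (l : ℝ) ^ β ≤ (1 + β)⁻¹ * ((l : ℝ) ^ p - ((l : ℝ) - 1) ^ p) := by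
    intro l hl
    have hl1 : (1 : ℝ) ≤ (l : ℝ) := by
      have := (Finset.mem_Icc.1 hl).1; exact_mod_cast this
    have hx0 : (0 : ℝ) < l := by linarith
    have hs : (-1 : ℝ) ≤ -(l : ℝ)⁻¹ := by
      have h1 : (l : ℝ)⁻¹ ≤ 1 := by
        rw [inv_le_one_iff₀]; right; exact hl1
      linarith
    have bern := rpow_one_add_le_one_add_mul_self hs hp0.le hp1
    have hxp : (0:ℝ) < (l:ℝ) ^ p := Real.rpow_pos_of_pos hx0 _
    have hmul := mul_le_mul_of_nonneg_left bern hxp.le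
    have e1 : (l:ℝ) ^ p * (1 + -(l:ℝ)⁻¹) ^ p = ((l:ℝ) - 1) ^ p := by
      rw [← Real.mul_rpow hx0.le (by linarith)]
      congr 1
      field_simp
      ring
    have e2 : (l:ℝ) ^ p * (1 + p * -(l:ℝ)⁻¹) = (l:ℝ) ^ p - p * (l:ℝ) ^ β := by
      have : (l:ℝ) ^ β = (l:ℝ) ^ p * (l:ℝ)⁻¹ := by
        rw [← Real.rpow_neg_one (l:ℝ), ← Real.rpow_add hx0]
        congr 1; ring
      rw [this]; ring
    rw [e1, e2] at hmul
    rw [← hp, le_inv_mul_iff₀ hp0]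
    linarith [hmul]
  calc P β m ≤ ∑ l ∈ Finset.Icc 1 m, (1 + β)⁻¹ * ((l : ℝ) ^ p - ((l : ℝ) - 1) ^ p) :=
        Finset.sum_le_sum key
    _ = (1 + β)⁻¹ * ∑ l ∈ Finset.Icc 1 m, ((l : ℝ) ^ p - ((l : ℝ) - 1) ^ p) := by
        rw [Finset.mul_sum]
    _ = (1 + β)⁻¹ * (m : ℝ) ^ p := by
        congr 1
        rw [← Finset.Ico_add_one_right_eq_Icc, Finset.sum_Ico_eq_sum_range]
        have : ∀ i ∈ Finset.range (m + 1 - 1), ((1 + i : ℕ) : ℝ) ^ p - (((1 + i : ℕ) : ℝ) - 1) ^ p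
            = (fun j : ℕ => (j : ℝ) ^ p) (i + 1) - (fun j : ℕ => (j : ℝ) ^ p) i := by
          intro i _
          push_cast
          ring_nf
        rw [Finset.sum_congr rfl this, Finset.sum_range_sub (fun j : ℕ => (j : ℝ) ^ p)]
        simp [Real.zero_rpow hp0.ne']

lemma half_rpow {x : ℝ} (hx : 0 ≤ x) {q : ℝ} (hq0 : 0 ≤ q) (hq2 : q ≤ 2) :
    4⁻¹ * x ^ q ≤ (x / 2) ^ q := by
  rw [Real.div_rpow hx (by norm_num)]
  have h2p : (2:ℝ) ^ q ≤ 4 := by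
    have h4 : (4:ℝ) = (2:ℝ) ^ ((2:ℕ):ℝ) := by rw [Real.rpow_natCast]; norm_num
    rw [h4]
    exact Real.rpow_le_rpow_of_exponent_le one_le_two (by push_cast; linarith)
  have := div_le_div_of_nonneg_left (Real.rpow_nonneg hx q) (by positivity) h2p
  rw [inv_mul_eq_div]
  exact this

/-- For `-1 < β ≤ 1` the power sum is `Θ(m^{1+β})`. -/
lemma sumM {β : ℝ} (hβ1 : -1 < β) (hβ2 : β ≤ 1) :
    ∃ c C : ℝ, 0 < c ∧ 0 < C ∧ ∀ m : ℕ, 1 ≤ m →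
      c * (m : ℝ) ^ (1 + β) ≤ P β m ∧ P β m ≤ C * (m : ℝ) ^ (1 + β) := by
  rcases le_or_gt β 0 with h0 | h0
  · have hp0 : (0:ℝ) < 1 + β := by linarith
    refine ⟨1, (1 + β)⁻¹, one_pos, by positivity, fun m hm => ?_⟩
    have hm1 : (1 : ℝ) ≤ (m : ℝ) := by exact_mod_cast hm
    have hmpos : (0 : ℝ) < m := by linarith
    refine ⟨?_, mid_upper hβ1 h0 m⟩
    rw [one_mul, Real.rpow_add hmpos, Real.rpow_one]
    calc (m : ℝ) * (m : ℝ) ^ β = ∑ _l ∈ Finset.Icc 1 m, (m : ℝ) ^ β := by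
          rw [Finset.sum_const, Nat.card_Icc, Nat.add_sub_cancel, nsmul_eq_mul]
      _ ≤ P β m := Finset.sum_le_sum fun l hl => by
          have h1 : (0 : ℝ) < l := by
            have := (Finset.mem_Icc.1 hl).1; positivity
          have h2 : (l : ℝ) ≤ m := by exact_mod_cast (Finset.mem_Icc.1 hl).2
          exact Real.rpow_le_rpow_of_nonpos h1 h2 h0
  · refine ⟨4⁻¹, 1, by norm_num, one_pos, fun m hm => ?_⟩
    have hm1 : (1 : ℝ) ≤ (m : ℝ) := by exact_mod_cast hm
    have hmpos : (0 : ℝ) < m := by linarith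
    constructor
    · set k := m / 2 with hk
      have hkm : k < m := Nat.div_lt_self (by omega) one_lt_two
      have hsub : Finset.Icc (k + 1) m ⊆ Finset.Icc 1 m := by
        intro x hx; rw [Finset.mem_Icc] at *; omega
      have hbound : ∀ l ∈ Finset.Icc (k + 1) m, ((m : ℝ) / 2) ^ β ≤ (l : ℝ) ^ β := by
        intro l hl
        have h1 : k + 1 ≤ l := (Finset.mem_Icc.1 hl).1
        have h2 : 2 * (k + 1) ≥ m := by omega
        have : (m : ℝ) / 2 ≤ l := by
          have c1 : ((m : ℕ) : ℝ) ≤ 2 * ((k : ℕ) + 1 : ℕ) := by exact_mod_cast h2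
          have c2 : ((k + 1 : ℕ) : ℝ) ≤ l := by exact_mod_cast h1
          push_cast at c1 c2 ⊢
          linarith
        exact Real.rpow_le_rpow (by positivity) this h0.le
      have hcard : ((m - k : ℕ) : ℝ) ≥ (m : ℝ) / 2 := by
        have : 2 * (m - k) ≥ m := by omega
        have := (Nat.cast_le (α := ℝ)).2 this
        push_cast at this ⊢
        linarith
      have hstep : ((m : ℝ) / 2) * ((m : ℝ) / 2) ^ β ≤ P β m := by
        calc ((m : ℝ) / 2) * ((m : ℝ) / 2) ^ β
            ≤ ((m - k : ℕ) : ℝ) * ((m : ℝ) / 2) ^ β := by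
              apply mul_le_mul_of_nonneg_right hcard (by positivity)
          _ = (Finset.Icc (k + 1) m).card • ((m : ℝ) / 2) ^ β := by
              rw [Nat.card_Icc, nsmul_eq_mul]
              congr 2
              omega
          _ ≤ ∑ l ∈ Finset.Icc (k + 1) m, (l : ℝ) ^ β := Finset.card_nsmul_le_sum _ _ _ hbound
          _ ≤ P β m := Finset.sum_le_sum_of_subset_of_nonneg hsub
              fun l _ _ => Real.rpow_nonneg (Nat.cast_nonneg l) β
      have e : ((m : ℝ) / 2) * ((m : ℝ) / 2) ^ β = ((m : ℝ) / 2) ^ (1 + β) := by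
        rw [Real.rpow_add (by positivity), Real.rpow_one]
      have e2 := half_rpow hmpos.le (by linarith : (0:ℝ) ≤ 1 + β) (by linarith : (1:ℝ) + β ≤ 2)
      linarith [hstep, e ▸ hstep]
    · rw [one_mul, Real.rpow_add hmpos, Real.rpow_one]
      calc P β m ≤ ∑ _l ∈ Finset.Icc 1 m, (m : ℝ) ^ β := Finset.sum_le_sum fun l hl => by
            have h2 : (l : ℝ) ≤ m := by exact_mod_cast (Finset.mem_Icc.1 hl).2
            exact Real.rpow_le_rpow (Nat.cast_nonneg l) h2 h0.le
        _ = (m : ℝ) * (m : ℝ) ^ β := by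
            rw [Finset.sum_const, Nat.card_Icc, Nat.add_sub_cancel, nsmul_eq_mul]

lemma theta_of (f h : ℕ → ℝ) (c₁ c₂ : ℝ) (hc : 0 < c₁) (N₀ : ℕ)
    (hh : ∀ n, N₀ ≤ n → 0 ≤ h n)
    (H : ∀ n, N₀ ≤ n → c₁ * h n ≤ f n ∧ f n ≤ c₂ * h n) : IsBigTheta f h :=
  ⟨c₁, max c₁ c₂, hc, le_max_left _ _, N₀, fun n hn =>
    ⟨(H n hn).1, (H n hn).2.trans
      (mul_le_mul_of_nonneg_right (le_max_right _ _) (hh n hn))⟩⟩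

lemma q_bounds {nr z s az bz as bs : ℝ} (hnr : 0 ≤ nr) (haz : 0 < az)
    (h1 : az ≤ z) (h2 : z ≤ bz) (h3 : as ≤ s) (h4 : s ≤ bs) (has : 0 ≤ as) :
    nr * bz⁻¹ * as ≤ nr * z⁻¹ * s ∧ nr * z⁻¹ * s ≤ nr * az⁻¹ * bs := by
  have hz : 0 < z := haz.trans_le h1
  have hbz : 0 < bz := hz.trans_le h2
  have hs : 0 ≤ s := has.trans h3
  constructor
  · have hinv : bz⁻¹ ≤ z⁻¹ := inv_anti₀ hz h2
    calc nr * bz⁻¹ * as ≤ nr * z⁻¹ * as := by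
          apply mul_le_mul_of_nonneg_right _ has
          exact mul_le_mul_of_nonneg_left hinv hnr
      _ ≤ nr * z⁻¹ * s := by
          apply mul_le_mul_of_nonneg_left h3
          positivity
  · have hinv : z⁻¹ ≤ az⁻¹ := inv_anti₀ haz h1
    calc nr * z⁻¹ * s ≤ nr * az⁻¹ * s := by
          apply mul_le_mul_of_nonneg_right _ hs
          exact mul_le_mul_of_nonneg_left hinv hnr
      _ ≤ nr * az⁻¹ * bs := by
          apply mul_le_mul_of_nonneg_left h4
          positivity

lemma alg1 (nr mR t b c : ℝ) (ht : t ≠ 0) (hb : b ≠ 0) :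
    nr * (b * t)⁻¹ * (c * (t * mR)) = (c / b) * (nr * mR) := by
  field_simp

lemma Q_eq (γ : ℝ) (n : ℕ) : Q γ n = (n : ℝ) * (P (-γ) (n - 1))⁻¹ * P (1 - γ) (n - 1) := rfl

lemma cast_facts {n : ℕ} (hn : 2 ≤ n) :
    1 ≤ n - 1 ∧ (1:ℝ) ≤ ((n - 1 : ℕ) : ℝ) ∧ ((n - 1 : ℕ) : ℝ) ≤ (n : ℝ) ∧
      (n : ℝ) / 2 ≤ ((n - 1 : ℕ) : ℝ) ∧ (0:ℝ) < n := by
  have h1 : ((n - 1 : ℕ) : ℝ) = (n : ℝ) - 1 := by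
    have : (1:ℕ) ≤ n := by omega
    push_cast [this]
    ring
  have h2 : (2:ℝ) ≤ (n:ℝ) := by exact_mod_cast hn
  refine ⟨by omega, by rw [h1]; linarith, by rw [h1]; linarith, by rw [h1]; linarith, by linarith⟩

lemma log_bounds {n : ℕ} (hn : 2 ≤ n) :
    Real.log n ≤ P (-1) (n - 1) ∧
      P (-1) (n - 1) ≤ (1 + (Real.log 2)⁻¹) * Real.log n ∧ 0 < Real.log n := by
  obtain ⟨hm, hm1, hmle, hmge, hn0⟩ := cast_facts hn
  obtain ⟨hL, hU⟩ := sumH (n - 1)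
  have hcast : ((n - 1 : ℕ) : ℝ) + 1 = (n : ℝ) := by
    have : (1:ℕ) ≤ n := by omega
    push_cast [this]
    ring
  have hlog2 : 0 < Real.log 2 := Real.log_pos (by norm_num)
  have hlogn : Real.log 2 ≤ Real.log n := by
    apply Real.log_le_log (by norm_num)
    exact_mod_cast hn
  have hlogpos : 0 < Real.log n := lt_of_lt_of_le hlog2 hlogn
  refine ⟨by rwa [hcast] at hL, ?_, hlogpos⟩
  have hmono : Real.log ((n - 1 : ℕ) : ℝ) ≤ Real.log n := by
    apply Real.log_le_log (by linarith) hmle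
  have h1 : (1:ℝ) ≤ (Real.log 2)⁻¹ * Real.log n := by
    rw [← div_eq_inv_mul, le_div_iff₀ hlog2, one_mul]
    exact hlogn
  calc P (-1) (n - 1) ≤ 1 + Real.log ((n - 1 : ℕ) : ℝ) := hU
    _ ≤ (Real.log 2)⁻¹ * Real.log n + Real.log n := by linarith
    _ = (1 + (Real.log 2)⁻¹) * Real.log n := by ring

theorem expected_total_friends_order (γ : ℝ) (hγ : 0 ≤ γ) :
    (2 < γ → IsBigTheta (fun n => Q γ n) (fun n => (n : ℝ))) ∧
    (γ = 2 → IsBigTheta (fun n => Q γ n) (fun n => (n : ℝ) * Real.log n)) ∧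
    (1 < γ ∧ γ < 2 → IsBigTheta (fun n => Q γ n) (fun n => (n : ℝ) ^ (3 - γ))) ∧
    (γ = 1 → IsBigTheta (fun n => Q γ n) (fun n => (n : ℝ) ^ 2 / Real.log n)) ∧
    (γ < 1 → IsBigTheta (fun n => Q γ n) (fun n => (n : ℝ) ^ 2)) := by
  refine ⟨?_, ?_, ?_, ?_, ?_⟩
  · -- γ > 2
    intro hγ2
    obtain ⟨C₁, hC₁, HZ⟩ := sumA (show -γ < -1 by linarith)
    obtain ⟨C₂, hC₂, HS⟩ := sumA (show 1 - γ < -1 by linarith)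
    apply theta_of _ _ C₁⁻¹ C₂ (by positivity) 2 (fun n hn => by positivity)
    intro n hn
    obtain ⟨hm, hm1, hmle, hmge, hn0⟩ := cast_facts hn
    obtain ⟨hz1, hz2⟩ := HZ (n - 1) hm
    obtain ⟨hs1, hs2⟩ := HS (n - 1) hm
    obtain ⟨L, U⟩ := q_bounds (nr := (n:ℝ)) hn0.le one_pos hz1 hz2 hs1 hs2 zero_le_one
    rw [Q_eq]
    constructor
    · calc C₁⁻¹ * (n:ℝ) = (n:ℝ) * C₁⁻¹ * 1 := by ring
        _ ≤ _ := L
    · calc (n:ℝ) * (P (-γ) (n-1))⁻¹ * P (1-γ) (n-1) ≤ (n:ℝ) * 1⁻¹ * C₂ := U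
        _ = C₂ * (n:ℝ) := by ring
  · -- γ = 2
    rintro rfl
    obtain ⟨C₁, hC₁, HZ⟩ := sumA (show -(2:ℝ) < -1 by norm_num)
    set K := 1 + (Real.log 2)⁻¹ with hK
    have hKpos : 0 < K := by
      have : 0 < Real.log 2 := Real.log_pos (by norm_num)
      positivity
    apply theta_of _ _ C₁⁻¹ K (by positivity) 2
    · intro n hn
      have h2 : (2:ℝ) ≤ (n:ℝ) := by exact_mod_cast hn
      have : 0 ≤ Real.log n := Real.log_nonneg (by linarith)
      positivity
    intro n hn
    obtain ⟨hm, hm1, hmle, hmge, hn0⟩ := cast_facts hn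
    obtain ⟨hz1, hz2⟩ := HZ (n - 1) hm
    obtain ⟨hl1, hl2, hlpos⟩ := log_bounds hn
    have hPS : P (1 - 2) (n - 1) = P (-1) (n - 1) := by norm_num
    obtain ⟨L, U⟩ := q_bounds (nr := (n:ℝ)) hn0.le one_pos hz1 hz2 hl1 hl2 hlpos.le
    rw [Q_eq, hPS]
    constructor
    · calc C₁⁻¹ * ((n:ℝ) * Real.log n) = (n:ℝ) * C₁⁻¹ * Real.log n := by ring
        _ ≤ _ := L
    · calc (n:ℝ) * (P (-2) (n-1))⁻¹ * P (-1) (n-1) ≤ (n:ℝ) * 1⁻¹ * (K * Real.log n) := U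
        _ = K * ((n:ℝ) * Real.log n) := by ring
  · -- 1 < γ < 2
    rintro ⟨hγ1, hγ2⟩
    obtain ⟨C₁, hC₁, HZ⟩ := sumA (show -γ < -1 by linarith)
    obtain ⟨c₂, C₂, hc₂, hC₂, HS⟩ := sumM (show -1 < 1 - γ by linarith) (show 1 - γ ≤ 1 by linarith)
    have he : (1:ℝ) + (1 - γ) = 2 - γ := by ring
    apply theta_of _ _ (C₁⁻¹ * c₂ * 4⁻¹) C₂ (by positivity) 2
    · intro n hn
      positivity
    intro n hn
    obtain ⟨hm, hm1, hmle, hmge, hn0⟩ := cast_facts hn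
    obtain ⟨hz1, hz2⟩ := HZ (n - 1) hm
    obtain ⟨hs1, hs2⟩ := HS (n - 1) hm
    rw [he] at hs1 hs2
    have hmr0 : (0:ℝ) ≤ ((n-1:ℕ):ℝ) := by linarith
    have hq0 : (0:ℝ) ≤ 2 - γ := by linarith
    obtain ⟨L, U⟩ := q_bounds (nr := (n:ℝ)) hn0.le one_pos hz1 hz2 hs1 hs2 (by positivity)
    have hsplit : (n:ℝ) ^ (3 - γ) = (n:ℝ) * (n:ℝ) ^ (2 - γ) := by
      rw [show (3:ℝ) - γ = 1 + (2 - γ) by ring, Real.rpow_add hn0, Real.rpow_one]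
    rw [Q_eq]
    constructor
    · have step : 4⁻¹ * (n:ℝ) ^ (2 - γ) ≤ ((n-1:ℕ):ℝ) ^ (2 - γ) := by
        calc 4⁻¹ * (n:ℝ) ^ (2 - γ) ≤ ((n:ℝ) / 2) ^ (2 - γ) :=
              half_rpow hn0.le hq0 (by linarith)
          _ ≤ ((n-1:ℕ):ℝ) ^ (2 - γ) := Real.rpow_le_rpow (by positivity) hmge hq0
      calc C₁⁻¹ * c₂ * 4⁻¹ * (n:ℝ) ^ (3 - γ)
          = (n:ℝ) * C₁⁻¹ * (c₂ * (4⁻¹ * (n:ℝ) ^ (2 - γ))) := by rw [hsplit]; ring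
        _ ≤ (n:ℝ) * C₁⁻¹ * (c₂ * ((n-1:ℕ):ℝ) ^ (2 - γ)) := by
            apply mul_le_mul_of_nonneg_left _ (by positivity)
            exact mul_le_mul_of_nonneg_left step hc₂.le
        _ ≤ _ := L
    · have step : ((n-1:ℕ):ℝ) ^ (2 - γ) ≤ (n:ℝ) ^ (2 - γ) :=
        Real.rpow_le_rpow hmr0 hmle hq0
      calc (n:ℝ) * (P (-γ) (n-1))⁻¹ * P (1-γ) (n-1)
          ≤ (n:ℝ) * 1⁻¹ * (C₂ * ((n-1:ℕ):ℝ) ^ (2 - γ)) := U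
        _ ≤ (n:ℝ) * 1⁻¹ * (C₂ * (n:ℝ) ^ (2 - γ)) := by
            apply mul_le_mul_of_nonneg_left _ (by positivity)
            exact mul_le_mul_of_nonneg_left step hC₂.le
        _ = C₂ * (n:ℝ) ^ (3 - γ) := by rw [hsplit]; ring
  · -- γ = 1
    rintro rfl
    set K := 1 + (Real.log 2)⁻¹ with hK
    have hlog2 : 0 < Real.log 2 := Real.log_pos (by norm_num)
    have hKpos : 0 < K := by positivity
    apply theta_of _ _ (2 * K)⁻¹ 1 (by positivity) 2
    · intro n hn
      have h2 : (2:ℝ) ≤ (n:ℝ) := by exact_mod_cast hn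
      have : 0 ≤ Real.log n := Real.log_nonneg (by linarith)
      positivity
    intro n hn
    obtain ⟨hm, hm1, hmle, hmge, hn0⟩ := cast_facts hn
    obtain ⟨hl1, hl2, hlpos⟩ := log_bounds hn
    have hPS : P (1 - 1) (n - 1) = ((n-1:ℕ):ℝ) := by
      have : ∀ l ∈ Finset.Icc 1 (n-1), (l:ℝ) ^ ((1:ℝ) - 1) = 1 := by
        intro l _
        norm_num
      rw [P, Finset.sum_congr rfl this, Finset.sum_const, Nat.card_Icc, Nat.add_sub_cancel]
      simp
    obtain ⟨L, U⟩ := q_bounds (nr := (n:ℝ)) hn0.le hlpos hl1 hl2 hmge hmle (by positivity)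
    rw [Q_eq, hPS]
    constructor
    · calc (2 * K)⁻¹ * ((n:ℝ) ^ 2 / Real.log n)
          = (n:ℝ) * (K * Real.log n)⁻¹ * ((n:ℝ) / 2) := by
            rw [pow_two]
            field_simp
        _ ≤ _ := L
    · calc (n:ℝ) * (P (-1) (n-1))⁻¹ * ((n-1:ℕ):ℝ) ≤ (n:ℝ) * (Real.log n)⁻¹ * (n:ℝ) := U
        _ = 1 * ((n:ℝ) ^ 2 / Real.log n) := by
            rw [pow_two]
            field_simp
  · -- 0 ≤ γ < 1
    intro hγ1
    obtain ⟨c₁, C₁, hc₁, hC₁, HZ⟩ := sumM (show -1 < -γ by linarith) (show -γ ≤ 1 by linarith)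
    obtain ⟨c₂, C₂, hc₂, hC₂, HS⟩ := sumM (show -1 < 1 - γ by linarith) (show 1 - γ ≤ 1 by linarith)
    have he1 : (1:ℝ) + -γ = 1 - γ := by ring
    have he2 : (1:ℝ) + (1 - γ) = 2 - γ := by ring
    apply theta_of _ _ (c₂ / C₁ / 2) (C₂ / c₁) (by positivity) 2
    · intro n hn
      positivity
    intro n hn
    obtain ⟨hm, hm1, hmle, hmge, hn0⟩ := cast_facts hn
    obtain ⟨hz1, hz2⟩ := HZ (n - 1) hm
    obtain ⟨hs1, hs2⟩ := HS (n - 1) hm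
    rw [he1] at hz1 hz2
    rw [he2] at hs1 hs2
    have hmr0 : (0:ℝ) < ((n-1:ℕ):ℝ) := by linarith
    have ht : (0:ℝ) < ((n-1:ℕ):ℝ) ^ ((1:ℝ) - γ) := Real.rpow_pos_of_pos hmr0 _
    have hsplit : ((n-1:ℕ):ℝ) ^ ((2:ℝ) - γ) = ((n-1:ℕ):ℝ) ^ ((1:ℝ) - γ) * ((n-1:ℕ):ℝ) := by
      rw [show (2:ℝ) - γ = (1 - γ) + 1 by ring, Real.rpow_add hmr0, Real.rpow_one]
    rw [hsplit] at hs1 hs2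
    obtain ⟨L, U⟩ := q_bounds (nr := (n:ℝ)) hn0.le (by positivity) hz1 hz2 hs1 hs2 (by positivity)
    rw [Q_eq]
    constructor
    · calc (c₂ / C₁ / 2) * (n:ℝ) ^ 2
          ≤ (c₂ / C₁) * ((n:ℝ) * ((n-1:ℕ):ℝ)) := by
            rw [pow_two]
            have h : (n:ℝ) * ((n:ℝ) / 2) ≤ (n:ℝ) * ((n-1:ℕ):ℝ) :=
              mul_le_mul_of_nonneg_left hmge hn0.le
            calc c₂ / C₁ / 2 * ((n:ℝ) * (n:ℝ)) = (c₂ / C₁) * ((n:ℝ) * ((n:ℝ) / 2)) := by ring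
              _ ≤ (c₂ / C₁) * ((n:ℝ) * ((n-1:ℕ):ℝ)) := by
                  apply mul_le_mul_of_nonneg_left h (by positivity)
        _ = (n:ℝ) * (C₁ * ((n-1:ℕ):ℝ) ^ ((1:ℝ) - γ))⁻¹
              * (c₂ * (((n-1:ℕ):ℝ) ^ ((1:ℝ) - γ) * ((n-1:ℕ):ℝ))) :=
            (alg1 _ _ _ _ _ ht.ne' hC₁.ne').symm
        _ ≤ _ := L
    · calc (n:ℝ) * (P (-γ) (n-1))⁻¹ * P (1-γ) (n-1)
          ≤ (n:ℝ) * (c₁ * ((n-1:ℕ):ℝ) ^ ((1:ℝ) - γ))⁻¹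
              * (C₂ * (((n-1:ℕ):ℝ) ^ ((1:ℝ) - γ) * ((n-1:ℕ):ℝ))) := U
        _ = (C₂ / c₁) * ((n:ℝ) * ((n-1:ℕ):ℝ)) := alg1 _ _ _ _ _ ht.ne' hc₁.ne'
        _ ≤ (C₂ / c₁) * (n:ℝ) ^ 2 := by
            rw [pow_two]
            apply mul_le_mul_of_nonneg_left _ (by positivity)
            exact mul_le_mul_of_nonneg_left hmle hn0.le
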